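/- Let n ≥ 3 and let e be a positive rational. Let A be the n×n symmetric matrix with a_{i,i} = −2 and a_{i,n} = a_{n,i} = 1 for all i ≤ n−1, a_{i,j} = 0 for all distinct i, j ≤ n−1, and a_{n,n} = −e. Then: (1) A is negative definite if and only if e > (n−1)/2; (2) assuming e > (n−1)/2, A satisfies (NN) if and only if e > n/2. -/

import Mathlib

/-- `A` is negative definite: `xᵀAx < 0` for every nonzero real vector `x`. -/
def NegDefQ {V : Type*} [Fintype V] (A : Matrix V V ℚ) : Prop :=
  ∀ x : V → ℝ, x ≠ 0 → ∑ i, ∑ j, x i * (A i j : ℝ) * x j < 0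

/-- Numerical Nash condition `NN_(i,j)`: for every rational vector `C` with nonpositive
entries there is an integer vector `X` with positive entries such that `(AX)_k ≤ C_k`
for all `k` and `X i < X j`. -/
def NashNN {V : Type*} [Fintype V] (A : Matrix V V ℚ) (i j : V) : Prop :=
  ∀ C : V → ℚ, (∀ k, C k ≤ 0) →
    ∃ X : V → ℤ, (∀ k, 0 < X k) ∧ (∀ k, ∑ t, A k t * (X t : ℚ) ≤ C k) ∧ X i < X j

/-- Condition `(NN)`: `NN_(i,j)` for every ordered pair of distinct indices. -/
def NashNNAll {V : Type*} [Fintype V] (A : Matrix V V ℚ) : Prop :=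
  ∀ i j : V, i ≠ j → NashNN A i j

theorem star_row {K : Type*} [Field K] {n : ℕ} (e : K) (B : Matrix (Fin n) (Fin n) K) (r : Fin n)
    (hB : ∀ i j, B i j = if i = j then (if i = r then -e else -2)
        else (if i = r ∨ j = r then 1 else 0)) :
    ∀ (X : Fin n → K) (k : Fin n), (∑ u, B k u * X u)
      = if k = r then (-e - 1) * X r + ∑ u, X u else -2 * X k + X r := by
  intro X k
  by_cases hk : k = r
  · subst hk
    have h1 : ∀ u, B k u * X u = X u + (if u = k then (-e - 1) * X u else 0) := by
      intro u; rw [hB]; by_cases hu : k = u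
      · subst hu; simp; ring
      · have hu' : ¬ u = k := fun h => hu h.symm
        simp [hu, hu']
    rw [Finset.sum_congr rfl (fun u _ => h1 u), Finset.sum_add_distrib,
      Finset.sum_ite_eq' Finset.univ k (fun u => (-e - 1) * X u)]
    simp; ring
  · have h1 : ∀ u, B k u * X u = (if u = k then -2 * X u else 0) + (if u = r then X u else 0) := by
      intro u; rw [hB]
      by_cases h2 : k = u
      · subst h2; simp [hk]
      · have h2' : ¬ u = k := fun h => h2 h.symm
        by_cases h3 : u = r
        · subst h3; simp [h2, h2']
        · simp [h2, h2', h3, hk]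
    rw [Finset.sum_congr rfl (fun u _ => h1 u), Finset.sum_add_distrib,
      Finset.sum_ite_eq' Finset.univ k (fun u => -2 * X u),
      Finset.sum_ite_eq' Finset.univ r X]
    simp [hk]

theorem star_quad {n : ℕ} (e : ℝ) (B : Matrix (Fin n) (Fin n) ℝ) (r : Fin n)
    (hB : ∀ i j, B i j = if i = j then (if i = r then -e else -2)
        else (if i = r ∨ j = r then 1 else 0)) (x : Fin n → ℝ) :
    ∑ i, ∑ j, x i * B i j * x j
      = -2 * (∑ i, (if i = r then 0 else x i - x r / 2)^2)
        - (e - ((n:ℝ) - 1)/2) * (x r)^2 := by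
  have hrow := star_row e B r hB x
  have h0 : ∑ i, ∑ j, x i * B i j * x j = ∑ i, x i * ∑ j, B i j * x j := by
    refine Finset.sum_congr rfl fun i _ => ?_
    rw [Finset.mul_sum]
    exact Finset.sum_congr rfl fun j _ => by ring
  rw [h0]
  have h1 : ∀ i, x i * ∑ j, B i j * x j
      = (-2 * x i ^ 2 + x i * x r)
        + (if i = r then x i * ((-e - 1) * x r + ∑ u, x u) - (-2 * x i ^2 + x i * x r) else 0) := by
    intro i; rw [hrow i]; by_cases hi : i = r <;> simp [hi] <;> ring
  rw [Finset.sum_congr rfl (fun i _ => h1 i), Finset.sum_add_distrib,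
    Finset.sum_ite_eq' Finset.univ r
      (fun i => x i * ((-e - 1) * x r + ∑ u, x u) - (-2 * x i ^2 + x i * x r))]
  have h2 : ∑ i, (-2 * x i ^ 2 + x i * x r)
      = -2 * (∑ i, x i ^ 2) + (∑ i, x i) * x r := by
    rw [Finset.sum_add_distrib, ← Finset.mul_sum, ← Finset.sum_mul]
  have h3 : ∑ i, (if i = r then (0:ℝ) else x i - x r / 2)^2
      = (∑ i, x i ^ 2) - (∑ i, x i) * x r + (n:ℝ) * (x r)^2/4 - (x r)^2/4 := by
    have h4 : ∀ i, (if i = r then (0:ℝ) else x i - x r / 2)^2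
        = (x i ^ 2 - x i * x r + (x r)^2/4) + (if i = r then -((x r)^2/4) else 0) := by
      intro i; by_cases hi : i = r <;> simp [hi] <;> ring
    rw [Finset.sum_congr rfl (fun i _ => h4 i), Finset.sum_add_distrib,
      Finset.sum_ite_eq' Finset.univ r (fun _ => -((x r)^2/4))]
    simp [Finset.sum_add_distrib, Finset.sum_sub_distrib, ← Finset.sum_mul, Finset.card_univ]
    ring
  rw [h2, h3]
  simp only [Finset.mem_univ, if_true]
  ring

theorem star_minus_two_NN (n : ℕ) (hn : 3 ≤ n) (e : ℚ) (he : 0 < e)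
    (A : Matrix (Fin n) (Fin n) ℚ) (r : Fin n) (hr : (r : ℕ) = n - 1)
    (hA : ∀ i j : Fin n, A i j =
      if i = j then (if i = r then -e else -2) else (if i = r ∨ j = r then 1 else 0)) :
    (NegDefQ A ↔ ((n : ℚ) - 1) / 2 < e) ∧
    (((n : ℚ) - 1) / 2 < e → (NashNNAll A ↔ (n : ℚ) / 2 < e)) := by
  have hAR : ∀ i j, ((A i j : ℚ) : ℝ)
      = if i = j then (if i = r then -(e:ℝ) else -2) else (if i = r ∨ j = r then 1 else 0) := by
    intro i j; rw [hA]; split_ifs <;> push_cast <;> ring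
  have hQ := star_quad (e:ℝ) (fun i j => ((A i j : ℚ) : ℝ)) r hAR
  constructor
  · constructor
    · -- NegDefQ → (n-1)/2 < e
      intro hND
      by_contra hle
      push_neg at hle
      have hle' : (e:ℝ) ≤ ((n:ℝ) - 1)/2 := by exact_mod_cast hle
      have hx0 : (fun i : Fin n => if i = r then (1:ℝ) else 1/2) ≠ 0 := by
        intro h
        have h2 := congrFun h r
        simp at h2
      have h3 := hND _ hx0
      rw [hQ (fun i : Fin n => if i = r then (1:ℝ) else 1/2)] at h3
      have hz : ∀ i ∈ Finset.univ, (if i = r then (0:ℝ)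
          else (if i = r then (1:ℝ) else 1/2) - (if r = r then (1:ℝ) else 1/2) / 2)^2 = 0 := by
        intro i _; by_cases hi : i = r <;> simp [hi]
      rw [Finset.sum_congr rfl hz] at h3
      simp at h3
      nlinarith [h3, hle']
    · -- (n-1)/2 < e → NegDefQ
      intro hlt x hx0
      have hlt' : ((n:ℝ) - 1)/2 < (e:ℝ) := by exact_mod_cast hlt
      rw [hQ x]
      have hz0 : (0:ℝ) ≤ ∑ i, (if i = r then 0 else x i - x r/2)^2 :=
        Finset.sum_nonneg fun i _ => sq_nonneg _
      by_cases hxr : x r = 0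
      · obtain ⟨i, hi⟩ := Function.ne_iff.mp hx0
        have hi' : x i ≠ 0 := hi
        have hir : i ≠ r := fun h => hi' (h ▸ hxr)
        have hpos : 0 < ∑ i, (if i = r then (0:ℝ) else x i - x r/2)^2 := by
          refine Finset.sum_pos' (fun k _ => sq_nonneg _) ⟨i, Finset.mem_univ i, ?_⟩
          rw [if_neg hir, hxr]
          have : x i - 0/2 = x i := by ring
          rw [this]
          exact (sq_nonneg _).lt_of_ne (Ne.symm (pow_ne_zero 2 hi'))
        nlinarith [sq_nonneg (x r)]
      · have hxr2 : 0 < (x r)^2 := by positivity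
        nlinarith
  · intro _
    constructor
    · -- NashNNAll → n/2 < e
      intro hN
      haveI : Nontrivial (Fin n) := Fin.nontrivial_iff_two_le.mpr (by omega)
      obtain ⟨j, hj⟩ := exists_ne r
      obtain ⟨X, hpos, hle, hlt⟩ := hN r j (Ne.symm hj) 0 (fun k => le_refl 0)
      have hrow : ∀ k, (∑ u, A k u * ((X u : ℤ) : ℚ))
          = if k = r then (-e - 1) * (X r:ℚ) + ∑ u, (X u:ℚ) else -2 * (X k:ℚ) + (X r:ℚ) :=
        star_row e A r hA (fun u => ((X u:ℤ):ℚ))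
      have hleaf : ∀ k, k ≠ r → -2 * (X k:ℚ) + (X r:ℚ) ≤ 0 := by
        intro k hk
        have h2 := hle k
        rw [hrow k, if_neg hk] at h2
        simpa using h2
      have hcen : (-e - 1) * (X r:ℚ) + ∑ u, (X u:ℚ) ≤ 0 := by
        have h2 := hle r
        rw [hrow r, if_pos rfl] at h2
        simpa using h2
      have hsum : (n:ℚ) * ((X r:ℚ)/2) + (X r:ℚ)/2 + ((X r:ℚ)/2 + 1) ≤ ∑ u, (X u:ℚ) := by
        have hpt : ∀ u ∈ Finset.univ, ((X r:ℚ)/2 + (if u = r then (X r:ℚ)/2 else 0)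
            + (if u = j then (X r:ℚ)/2 + 1 else 0)) ≤ (X u:ℚ) := by
          intro u _
          by_cases hur : u = r
          · subst hur
            rw [if_pos rfl, if_neg (fun h : u = j => hj (h.symm ▸ rfl))]
            linarith
          · rw [if_neg hur]
            by_cases huj : u = j
            · subst huj
              rw [if_pos rfl]
              have h4 : (X r : ℚ) + 1 ≤ (X u : ℚ) := by exact_mod_cast hlt
              linarith
            · rw [if_neg huj]
              have := hleaf u hur
              linarith
        calc (n:ℚ) * ((X r:ℚ)/2) + (X r:ℚ)/2 + ((X r:ℚ)/2 + 1)
            = ∑ u : Fin n, ((X r:ℚ)/2 + (if u = r then (X r:ℚ)/2 else 0)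
              + (if u = j then (X r:ℚ)/2 + 1 else 0)) := by
              rw [Finset.sum_add_distrib, Finset.sum_add_distrib,
                Finset.sum_ite_eq' Finset.univ r (fun _ => (X r:ℚ)/2),
                Finset.sum_ite_eq' Finset.univ j (fun _ => (X r:ℚ)/2 + 1),
                Finset.sum_const, Finset.card_univ, Fintype.card_fin, nsmul_eq_mul]
              simp
          _ ≤ ∑ u, (X u:ℚ) := Finset.sum_le_sum hpt
      have hxr1 : (1:ℚ) ≤ (X r:ℚ) := by exact_mod_cast hpos r
      by_contra hcon
      push_neg at hcon
      have h5 : e * (X r:ℚ) ≤ (n:ℚ)/2 * (X r:ℚ) :=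
        mul_le_mul_of_nonneg_right hcon (by linarith)
      linarith
    · -- n/2 < e → NashNNAll
      intro hhalf i j hij C hC
      set D : ℤ := ⌈∑ k, -C k⌉ with hDdef
      have hD0 : 0 ≤ D := Int.ceil_nonneg (Finset.sum_nonneg fun k _ => by linarith [hC k])
      have hDk : ∀ k, -C k ≤ (D:ℚ) := by
        intro k
        have h8 : ∀ u ∈ Finset.univ, (0:ℚ) ≤ -C u := fun u _ => by linarith [hC u]
        calc -C k ≤ ∑ u, -C u := Finset.single_le_sum h8 (Finset.mem_univ k)
          _ ≤ (D:ℚ) := Int.le_ceil _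
      have hden : 0 < 2*e - (n:ℚ) := by linarith
      set m : ℤ := max (D+1) ⌈(1 + (D:ℚ) + e*(D:ℚ))/(2*e - (n:ℚ))⌉ with hmdef
      have hm1 : D + 1 ≤ m := le_max_left _ _
      have hmq : 1 + (D:ℚ) + e*(D:ℚ) ≤ (2*e - (n:ℚ)) * (m:ℚ) := by
        have h1 : ((1 + (D:ℚ) + e*(D:ℚ))/(2*e - (n:ℚ))) ≤ (m:ℚ) := by
          calc ((1 + (D:ℚ) + e*(D:ℚ))/(2*e - (n:ℚ)))
              ≤ ((⌈(1 + (D:ℚ) + e*(D:ℚ))/(2*e - (n:ℚ))⌉ : ℤ) : ℚ) := Int.le_ceil _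
            _ ≤ (m:ℚ) := by
                have h9 : ⌈(1 + (D:ℚ) + e*(D:ℚ))/(2*e - (n:ℚ))⌉ ≤ m :=
                  le_max_right (D+1) _
                exact_mod_cast h9
        calc 1 + (D:ℚ) + e*(D:ℚ)
            = (2*e - (n:ℚ)) * ((1 + (D:ℚ) + e*(D:ℚ))/(2*e - (n:ℚ))) := by
                rw [mul_div_assoc', eq_div_iff hden.ne']; ring
          _ ≤ (2*e - (n:ℚ)) * (m:ℚ) := mul_le_mul_of_nonneg_left h1 (le_of_lt hden)
      have hmpos : 0 < m := by omega
      set M : ℤ := 2*m - D with hMdef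
      have hMm : m + 1 ≤ M := by omega
      set b : ℤ := if i = r then M + 1 else m + 1 with hbdef
      have hbm : m ≤ b := by rw [hbdef]; split_ifs <;> omega
      have hbM : b ≤ M + 1 := by rw [hbdef]; split_ifs <;> omega
      set X : Fin n → ℤ := fun k => if k = r then M else if k = j then b else m with hXdef
      have hXr : X r = M := by simp [hXdef]
      have hXlow : ∀ k, m ≤ X k := by
        intro k; rw [hXdef]; dsimp only; split_ifs <;> omega
      refine ⟨X, ?_, ?_, ?_⟩
      · intro k; have := hXlow k; omega
      · intro k
        have hrow : (∑ u, A k u * ((X u : ℤ) : ℚ))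
            = if k = r then (-e - 1) * (X r:ℚ) + ∑ u, (X u:ℚ) else -2 * (X k:ℚ) + (X r:ℚ) :=
          star_row e A r hA (fun u => ((X u:ℤ):ℚ)) k
        rw [hrow]
        by_cases hk : k = r
        · rw [if_pos hk, hXr]
          have hsumle : (∑ u, ((X u:ℤ):ℚ)) ≤ (n:ℚ)*(m:ℚ) + ((M:ℚ) - m) + ((b:ℚ) - m) := by
            have hpt : ∀ u ∈ Finset.univ, ((X u:ℤ):ℚ) ≤ ((m:ℚ)
                + (if u = r then (M:ℚ) - m else 0) + (if u = j then (b:ℚ) - m else 0)) := by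
              intro u _
              by_cases hur : u = r
              · rw [if_pos hur, hur, hXr]
                have hb0 : (0:ℚ) ≤ (b:ℚ) - m := by
                  have : (m:ℚ) ≤ (b:ℚ) := by exact_mod_cast hbm
                  linarith
                split_ifs <;> linarith
              · rw [if_neg hur]
                have hXu : X u = if u = j then b else m := by
                  rw [hXdef]; dsimp only; rw [if_neg hur]
                by_cases huj : u = j
                · rw [if_pos huj, hXu, if_pos huj]; linarith
                · rw [if_neg huj, hXu, if_neg huj]; linarith
            calc (∑ u, ((X u:ℤ):ℚ)) ≤ ∑ u : Fin n, ((m:ℚ)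
                  + (if u = r then (M:ℚ) - m else 0) + (if u = j then (b:ℚ) - m else 0)) :=
                  Finset.sum_le_sum hpt
              _ = (n:ℚ)*(m:ℚ) + ((M:ℚ) - m) + ((b:ℚ) - m) := by
                  rw [Finset.sum_add_distrib, Finset.sum_add_distrib,
                    Finset.sum_ite_eq' Finset.univ r (fun _ => (M:ℚ) - m),
                    Finset.sum_ite_eq' Finset.univ j (fun _ => (b:ℚ) - m),
                    Finset.sum_const, Finset.card_univ, Fintype.card_fin, nsmul_eq_mul]
                  simp
          have hCr : -(D:ℚ) ≤ C r := by linarith [hDk r]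
          have hMQ : (M:ℚ) = 2*(m:ℚ) - (D:ℚ) := by rw [hMdef]; push_cast; ring
          have hbQ : (b:ℚ) ≤ (M:ℚ) + 1 := by exact_mod_cast hbM
          have hD0Q : (0:ℚ) ≤ (D:ℚ) := by exact_mod_cast hD0
          rw [hk]
          nlinarith [hsumle, hmq]
        · rw [if_neg hk, hXr]
          have h6 : (m:ℚ) ≤ (X k:ℚ) := by exact_mod_cast hXlow k
          have hMQ : (M:ℚ) = 2*(m:ℚ) - (D:ℚ) := by rw [hMdef]; push_cast; ring
          have := hDk k
          linarith
      · -- X i < X j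
        by_cases hir : i = r
        · have hjr : j ≠ r := fun h => hij (hir.trans h.symm)
          have hXi : X i = M := by rw [hir, hXr]
          have hXj : X j = b := by rw [hXdef]; dsimp only; rw [if_neg hjr, if_pos rfl]
          have hbv : b = M + 1 := by rw [hbdef, if_pos hir]
          omega
        · have hXi : X i = m := by
            rw [hXdef]; dsimp only; rw [if_neg hir, if_neg hij]
          have hbv : b = m + 1 := by rw [hbdef, if_neg hir]
          by_cases hjr : j = r
          · have hXj : X j = M := by rw [hjr, hXr]
            omega
          · have hXj : X j = b := by rw [hXdef]; dsimp only; rw [if_neg hjr, if_pos rfl]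
            omega
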